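/- Fix a network (K, G) with fading structure π. Suppose there exist a nonempty subset of links L ⊆ K, a positive number σ, and two vectors μ, ν ∈ Φ(L) such that σ·μ > ν componentwise. Then for every sufficiently small ε > 0 there exist a deterministic channel process and a (randomized) arrival process satisfying Assumption A1, whose channel-state long-run averages equal π and whose arrival rate vector λ is supported on L and satisfies ‖λ|_L − (ν + ε·e_L)‖_∞ < ε (where e_L is the all-ones vector on L), such that under some tie-breaking rule for the GMS policy the queue process is unstable: E[Σ_{l∈K} Q_l[t]] → ∞ as t → ∞. -/

import Mathlib

open scoped BigOperators
open Filter MeasureTheory ProbabilityTheory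

/-- `S` is an independent set of the interference graph `G` contained in the
set of links `J` (pairwise non-adjacent links). -/
def IsIndepIn {V : Type*} (G : SimpleGraph V) (J S : Finset V) : Prop :=
  S ⊆ J ∧ ∀ u ∈ S, ∀ v ∈ S, ¬ G.Adj u v

/-- `S` is a maximal independent set of `J`. -/
def IsMaxIndepIn {V : Type*} (G : SimpleGraph V) (J S : Finset V) : Prop :=
  IsIndepIn G J S ∧ ∀ T, IsIndepIn G J T → S ⊆ T → S = T

/-- 0/1 indicator vector of a finite set of links. -/
def indVec {V : Type*} [DecidableEq V] (S : Finset V) : V → ℝ :=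
  fun v => if v ∈ S then 1 else 0

/-- `M_{J,L}` : the (finite) set of 0/1 indicator vectors of the maximal independent
sets of `J`; the vectors are encoded in the ambient space `ℝ^V`, coordinates outside `J`
are automatically `0`. -/
def Mset {V : Type*} [DecidableEq V] (G : SimpleGraph V) (J : Finset V) : Set (V → ℝ) :=
  indVec '' {S | IsMaxIndepIn G J S}

/-- `CH(M_{J,L})` : the convex hull of `M_{J,L}`. -/
noncomputable def CHM {V : Type*} [DecidableEq V] (G : SimpleGraph V) (J : Finset V) :
    Set (V → ℝ) :=
  convexHull ℝ (Mset G J)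

/-- A fading structure `π` on the set of links: nonnegative weights summing to one. -/
def IsFading {V : Type*} [Fintype V] [DecidableEq V] (π : Finset V → ℝ) : Prop :=
  (∀ J, 0 ≤ π J) ∧ ∑ J : Finset V, π J = 1

/-- `Φ(L) = { Σ_{J ⊆ K} π(J) η_J : η_J ∈ CH(M_{J∩L,L}) }`. -/
def Phi {V : Type*} [Fintype V] [DecidableEq V] (G : SimpleGraph V) (π : Finset V → ℝ)
    (L : Finset V) : Set (V → ℝ) :=
  {φ | ∃ η : Finset V → V → ℝ, (∀ J, η J ∈ CHM G (J ∩ L)) ∧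
    φ = ∑ J : Finset V, π J • η J}

/-- The fading local pooling factor `σ*_L(π)` of a set of links `L`. -/
noncomputable def sigmaL {V : Type*} [Fintype V] [DecidableEq V] (G : SimpleGraph V)
    (π : Finset V → ℝ) (L : Finset V) : ℝ :=
  sInf {σ : ℝ | 0 ≤ σ ∧ ∃ φ1 ∈ Phi G π L, ∃ φ2 ∈ Phi G π L, ∀ v ∈ L, φ2 v ≤ σ * φ1 v}

/-- The Fading-LPF `σ*_G(π)` of the network: minimum of `σ*_L(π)` over nonempty `L ⊆ K`. -/
noncomputable def sigmaG {V : Type*} [Fintype V] [DecidableEq V] (G : SimpleGraph V)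
    (π : Finset V → ℝ) : ℝ :=
  sInf (sigmaL G π '' {L : Finset V | L.Nonempty})
/-- The marginal distribution `π_L` induced on a subset of links `L`. -/
noncomputable def marginal {V : Type*} [Fintype V] [DecidableEq V] (π : Finset V → ℝ)
    (L J : Finset V) : ℝ :=
  ∑ I : Finset V, if I ∩ L = J then π I else 0

/-- `n(M_J)`: minimum cardinality of a maximal independent set of `J`. -/
noncomputable def nM {V : Type*} (G : SimpleGraph V) (J : Finset V) : ℕ :=
  sInf (Finset.card '' {S | IsMaxIndepIn G J S})

/-- `N(M_J)`: maximum cardinality of a maximal independent set of `J`. -/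
noncomputable def NM {V : Type*} (G : SimpleGraph V) (J : Finset V) : ℕ :=
  sSup (Finset.card '' {S | IsMaxIndepIn G J S})

/-- interference degree of a link `l`: maximum cardinality of an independent set of `G`
contained in the closed neighborhood of `l`. -/
noncomputable def dI {V : Type*} (G : SimpleGraph V) (l : V) : ℕ :=
  sSup (Finset.card '' {S : Finset V | (∀ u ∈ S, ∀ v ∈ S, ¬ G.Adj u v) ∧
    ∀ v ∈ S, v = l ∨ G.Adj l v})

/-- interference degree `d_I(G)` of the whole interference graph. -/
noncomputable def dIG {V : Type*} (G : SimpleGraph V) : ℕ :=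
  sSup (Set.range (dI G))

/-- interference degree `d_I(S)` of the subgraph of `G` induced on the set of links `S`. -/
noncomputable def dISet {V : Type*} (G : SimpleGraph V) (Sset : Finset V) : ℕ :=
  sSup (Finset.card '' {T : Finset V | T ⊆ Sset ∧ (∀ u ∈ T, ∀ v ∈ T, ¬ G.Adj u v) ∧
    ∃ l ∈ Sset, ∀ v ∈ T, v = l ∨ G.Adj l v})

/-- The throughput region `Λ_f`. -/
def LambdaF {V : Type*} [Fintype V] [DecidableEq V] (G : SimpleGraph V) (π : Finset V → ℝ) :
    Set (V → ℝ) :=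
  {lam | (∀ v, 0 < lam v) ∧ ∃ η : Finset V → V → ℝ,
    (∀ J, η J ∈ CHM G J) ∧ ∀ v, lam v ≤ ∑ J : Finset V, π J * η J v}

/-- The scaled region `Λ_f(x)`. -/
def LambdaX {V : Type*} [Fintype V] [DecidableEq V] (G : SimpleGraph V) (π : Finset V → ℝ)
    (x : Finset V → ℝ) : Set (V → ℝ) :=
  {lam | (∀ v, 0 < lam v) ∧ ∃ η : Finset V → V → ℝ,
    (∀ J, η J ∈ CHM G J) ∧ ∀ v, lam v ≤ ∑ J : Finset V, x J * π J * η J v}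

/-- The standard (non-fading) local pooling factor of a graph `H`. -/
noncomputable def stdLPF (W : Type*) [Fintype W] [DecidableEq W] (H : SimpleGraph W) : ℝ :=
  sInf ((fun L => sInf {σ : ℝ | 0 ≤ σ ∧ ∃ φ1 ∈ CHM H L, ∃ φ2 ∈ CHM H L,
    ∀ v ∈ L, φ2 v ≤ σ * φ1 v}) '' {L : Finset W | L.Nonempty})

/-- discrete measurable structure on global channel states -/
instance {α : Type*} : MeasurableSpace (Finset α) := ⊤

/-- The queue-length process `Q` evolves according to
`Q_l[t+1] = (Q_l[t] − C_l[t]·1{l ∈ S[t]})⁺ + A_l[t]`, `Q_l[0] = 0`,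
where `GS t ω` is the set of 'ON' links and `S t ω` is the schedule. -/
def QueueEvol {V : Type*} [DecidableEq V] {Ω : Type*} (A : ℕ → V → Ω → ℕ)
    (GS S : ℕ → Ω → Finset V) (Q : ℕ → V → Ω → ℕ) : Prop :=
  (∀ l ω, Q 0 l ω = 0) ∧
  ∀ t l ω, Q (t + 1) l ω =
    (Q t l ω - (if l ∈ GS t ω ∧ l ∈ S t ω then 1 else 0)) + A t l ω

/-- `S` is a greedy maximal schedule for the weights `w`: a maximal independent set of `G`
with an enumeration `s_0, …, s_{k-1}` such that each `s_i` has maximal weight among the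
links neither equal nor adjacent to any of `s_0, …, s_{i-1}`. -/
def IsGreedySchedule {V : Type*} [Fintype V] [DecidableEq V] (G : SimpleGraph V)
    (w : V → ℝ) (S : Finset V) : Prop :=
  IsMaxIndepIn G Finset.univ S ∧
  ∃ s : ℕ → V, S = (Finset.range S.card).image s ∧
    (∀ i < S.card, ∀ j < S.card, s i = s j → i = j) ∧
    ∀ i < S.card, ∀ v : V, (∀ j < i, v ≠ s j ∧ ¬ G.Adj v (s j)) → w v ≤ w (s i)

/-- A GMS policy: at every time and in every sample point, the schedule is a greedy
maximal schedule for the weights `w_l = Q_l[t]·C_l[t]`. -/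
def IsGMSPolicy {V : Type*} [Fintype V] [DecidableEq V] {Ω : Type*} (G : SimpleGraph V)
    (GS S : ℕ → Ω → Finset V) (Q : ℕ → V → Ω → ℕ) : Prop :=
  ∀ t ω, IsGreedySchedule G
    (fun l => (Q t l ω : ℝ) * (if l ∈ GS t ω then 1 else 0)) (S t ω)


/-! ### Auxiliary machinery for the adversarial construction -/

section AdvSeq
open Finset
variable {ι : Type*} [Fintype ι] [DecidableEq ι] [Nonempty ι]

set_option linter.unusedSectionVars false

noncomputable def advPick (f : ι → ℝ) : ι :=
  (Finset.exists_max_image Finset.univ f Finset.univ_nonempty).choose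

lemma advPick_max (f : ι → ℝ) (a : ι) : f a ≤ f (advPick f) :=
  (Finset.exists_max_image Finset.univ f Finset.univ_nonempty).choose_spec.2 a (mem_univ a)

noncomputable def advSt (p : ι → ℝ) : ℕ → ι → ℝ
  | 0 => fun _ => 0
  | (t+1) => fun k =>
      advSt p t k + p k - (if k = advPick (fun j => advSt p t j + p j) then 1 else 0)

lemma advSt_sum (p : ι → ℝ) (hp1 : ∑ k, p k = 1) (t : ℕ) : ∑ k, advSt p t k = 0 := by
  induction t with
  | zero => simp [advSt]
  | succ t ih =>
    simp only [advSt, Finset.sum_sub_distrib, Finset.sum_add_distrib, ih, hp1,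
      Finset.sum_ite_eq', mem_univ, if_true]
    ring

lemma advSt_lb (p : ι → ℝ) (hp0 : ∀ k, 0 ≤ p k) (hp1 : ∑ k, p k = 1) (t : ℕ) (k : ι) :
    1 / (Fintype.card ι : ℝ) - 1 ≤ advSt p t k := by
  have hcard : (0:ℝ) < (Fintype.card ι : ℝ) := by
    exact_mod_cast Fintype.card_pos
  induction t generalizing k with
  | zero =>
    simp only [advSt]
    rw [div_sub' hcard.ne', div_le_iff₀ hcard]
    have : (1:ℝ) ≤ (Fintype.card ι : ℝ) := by exact_mod_cast Fintype.card_pos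
    nlinarith
  | succ t ih =>
    simp only [advSt]
    by_cases hk : k = advPick (fun j => advSt p t j + p j)
    · rw [if_pos hk]
      have hmax : ∀ a, advSt p t a + p a ≤ advSt p t k + p k := by
        intro a; rw [hk]; exact advPick_max (fun j => advSt p t j + p j) a
      have hsum : (1:ℝ) = ∑ j, (advSt p t j + p j) := by
        rw [Finset.sum_add_distrib, advSt_sum p hp1, hp1]; ring
      have hle : (1:ℝ) ≤ (Fintype.card ι : ℝ) * (advSt p t k + p k) := by
        rw [hsum]
        calc ∑ j, (advSt p t j + p j) ≤ ∑ _j : ι, (advSt p t k + p k) :=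
              Finset.sum_le_sum fun j _ => hmax j
          _ = (Fintype.card ι : ℝ) * (advSt p t k + p k) := by
              rw [Finset.sum_const, Finset.card_univ, nsmul_eq_mul]
      have := (div_le_iff₀ hcard).2
        (by linarith [hle] : (1:ℝ) ≤ (advSt p t k + p k) * (Fintype.card ι : ℝ))
      linarith [this]
    · rw [if_neg hk]
      have := ih k
      have := hp0 k
      linarith

lemma advSt_ub (p : ι → ℝ) (hp0 : ∀ k, 0 ≤ p k) (hp1 : ∑ k, p k = 1) (t : ℕ) (k : ι) :
    advSt p t k ≤ (Fintype.card ι : ℝ) := by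
  have h := advSt_sum p hp1 t
  have hk : advSt p t k = - ∑ j ∈ univ.erase k, advSt p t j := by
    have : ∑ j ∈ univ.erase k, advSt p t j + advSt p t k = 0 := by
      rw [Finset.sum_erase_add _ _ (mem_univ k)]; exact h
    linarith
  have hb : ∀ j ∈ univ.erase k, -(1:ℝ) ≤ advSt p t j := fun j _ => by
    have hcard : (1:ℝ) ≤ (Fintype.card ι : ℝ) := by exact_mod_cast Fintype.card_pos
    have : (0:ℝ) < 1 / (Fintype.card ι : ℝ) := by positivity
    linarith [advSt_lb p hp0 hp1 t j]
  have : -((univ.erase k).card : ℝ) ≤ ∑ j ∈ univ.erase k, advSt p t j := by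
    calc -((univ.erase k).card : ℝ) = ∑ _j ∈ univ.erase k, (-1 : ℝ) := by
          rw [Finset.sum_const, nsmul_eq_mul]; ring
      _ ≤ _ := Finset.sum_le_sum hb
  have hle : ((univ.erase k).card : ℝ) ≤ (Fintype.card ι : ℝ) := by
    exact_mod_cast Finset.card_le_card (Finset.subset_univ _) |>.trans
      (le_of_eq Finset.card_univ)
  linarith

/-- A deterministic sequence over a finite alphabet realizing prescribed frequencies. -/
lemma adv_exists_seq (p : ι → ℝ) (hp0 : ∀ k, 0 ≤ p k) (hp1 : ∑ k, p k = 1) :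
    ∃ c : ℕ → ι, ∀ k, Tendsto
      (fun T : ℕ => (∑ t ∈ Finset.range T, if c t = k then (1:ℝ) else 0) / T)
      atTop (nhds (p k)) := by
  refine ⟨fun t => advPick (fun j => advSt p t j + p j), fun k => ?_⟩
  set c : ℕ → ι := fun t => advPick (fun j => advSt p t j + p j) with hc
  have key : ∀ T, ∑ t ∈ Finset.range T, (if c t = k then (1:ℝ) else 0)
      = T * p k - advSt p T k := by
    intro T
    induction T with
    | zero => simp [advSt]
    | succ T ih =>
      rw [Finset.sum_range_succ, ih]
      simp only [advSt]
      have : (if c T = k then (1:ℝ) else 0) = (if k = c T then (1:ℝ) else 0) := by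
        rcases eq_or_ne (c T) k with h | h
        · simp [h]
        · rw [if_neg h, if_neg (fun hh => h hh.symm)]
      rw [this]
      push_cast
      ring
  have hb : ∀ T : ℕ, |advSt p T k| ≤ (Fintype.card ι : ℝ) := by
    intro T
    rw [abs_le]
    constructor
    · have := advSt_lb p hp0 hp1 T k
      have h1 : (0:ℝ) < 1 / (Fintype.card ι : ℝ) := by positivity
      have h2 : (1:ℝ) ≤ (Fintype.card ι : ℝ) := by exact_mod_cast Fintype.card_pos
      linarith
    · exact advSt_ub p hp0 hp1 T k
  have hz : Tendsto (fun T : ℕ => advSt p T k / T) atTop (nhds 0) := by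
    apply squeeze_zero_norm (fun T => ?_)
      (tendsto_const_div_atTop_nhds_zero_nat (Fintype.card ι : ℝ))
    rw [norm_div]
    simp only [Real.norm_natCast]
    rcases Nat.eq_zero_or_pos T with h | h
    · subst h; simp
    · exact div_le_div_of_nonneg_right (hb T) (Nat.cast_nonneg T)
  have hlim : Tendsto (fun T : ℕ => p k - advSt p T k / T) atTop (nhds (p k - 0)) :=
    tendsto_const_nhds.sub hz
  rw [sub_zero] at hlim
  apply hlim.congr'
  filter_upwards [eventually_ne_atTop 0] with T hT
  rw [key T, sub_div, mul_comm, mul_div_assoc, div_self (by exact_mod_cast hT), mul_one]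

end AdvSeq

section AdvComb
open Finset
variable {V : Type*} [DecidableEq V]

lemma adv_indVec_inj : Function.Injective (indVec (V := V)) := by
  intro S T h
  ext v
  have hv := congrFun h v
  simp only [indVec] at hv
  by_cases hS : v ∈ S
  · by_cases hT : v ∈ T
    · simp [hS, hT]
    · simp [hS, hT] at hv
  · by_cases hT : v ∈ T
    · simp [hS, hT] at hv
    · simp [hS, hT]

lemma adv_exists_max_ext {V : Type*} [Fintype V] [DecidableEq V] (G : SimpleGraph V)
    (J S : Finset V) (hS : IsIndepIn G J S) :
    ∃ T, S ⊆ T ∧ IsMaxIndepIn G J T := by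
  classical
  have hne : (Finset.univ.filter (fun T : Finset V => IsIndepIn G J T ∧ S ⊆ T)).Nonempty :=
    ⟨S, by simp [hS]⟩
  obtain ⟨T, hTmem, hTmax⟩ := Finset.exists_max_image _ Finset.card hne
  rw [mem_filter] at hTmem
  refine ⟨T, hTmem.2.2, hTmem.2.1, fun T' hT' hsub => ?_⟩
  have hT'mem : T' ∈ Finset.univ.filter (fun T : Finset V => IsIndepIn G J T ∧ S ⊆ T) := by
    rw [mem_filter]
    exact ⟨mem_univ _, hT', hTmem.2.2.trans hsub⟩
  exact Finset.eq_of_subset_of_card_le hsub (hTmax T' hT'mem)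

lemma adv_exists_enum (v0 : V) (S T : Finset V) (hST : S ⊆ T) :
    ∃ s : ℕ → V, T = (Finset.range T.card).image s ∧
      (∀ i < T.card, ∀ j < T.card, s i = s j → i = j) ∧
      (∀ j < S.card, s j ∈ S) ∧ (∀ u ∈ S, ∃ j < S.card, s j = u) := by
  classical
  set lst : List V := S.toList ++ (T \ S).toList with hlst
  have hcard := Finset.card_le_card hST
  have hlen : lst.length = T.card := by
    simp only [hlst, List.length_append, Finset.length_toList, Finset.card_sdiff_of_subset hST]
    omega
  have hnd : lst.Nodup := by
    refine List.Nodup.append S.nodup_toList (T \ S).nodup_toList ?_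
    intro a ha hb
    rw [Finset.mem_toList] at ha hb
    exact (Finset.mem_sdiff.1 hb).2 ha
  set s : ℕ → V := fun i => lst.getD i v0 with hs
  have hget : ∀ i (h : i < lst.length), s i = lst[i] := fun i h => List.getD_eq_getElem lst v0 h
  have hmemT : ∀ x ∈ lst, x ∈ T := by
    intro x hx
    rcases List.mem_append.1 hx with hx | hx
    · exact hST (Finset.mem_toList.1 hx)
    · exact (Finset.mem_sdiff.1 (Finset.mem_toList.1 hx)).1
  have hSpart : ∀ j, j < S.card → s j ∈ S := by
    intro j hj
    have hj1 : j < S.toList.length := by rw [Finset.length_toList]; exact hj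
    have hj2 : j < lst.length := by rw [hlen]; omega
    rw [hget j hj2]
    have : lst[j] = S.toList[j] := List.getElem_append_left hj1
    rw [this]
    exact Finset.mem_toList.1 (List.getElem_mem _)
  refine ⟨s, ?_, ?_, hSpart, ?_⟩
  · apply Finset.Subset.antisymm
    · intro u hu
      have hul : u ∈ lst := by
        by_cases huS : u ∈ S
        · exact List.mem_append.2 (Or.inl (Finset.mem_toList.2 huS))
        · exact List.mem_append.2 (Or.inr (Finset.mem_toList.2 (Finset.mem_sdiff.2 ⟨hu, huS⟩)))
      obtain ⟨i, hi, hiu⟩ := List.mem_iff_getElem.1 hul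
      refine Finset.mem_image.2 ⟨i, Finset.mem_range.2 (by rw [← hlen]; exact hi), ?_⟩
      rw [hget i hi, hiu]
    · intro u hu
      obtain ⟨i, hi, hiu⟩ := Finset.mem_image.1 hu
      rw [Finset.mem_range, ← hlen] at hi
      rw [← hiu, hget i hi]
      exact hmemT _ (List.getElem_mem _)
  · intro i hi j hj hij
    rw [← hlen] at hi hj
    rw [hget i hi, hget j hj] at hij
    exact (List.Nodup.getElem_inj_iff hnd).1 hij
  · intro u hu
    obtain ⟨j, hj, hju⟩ := List.mem_iff_getElem.1 (Finset.mem_toList.2 hu)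
    have hj' : j < S.card := by rw [← Finset.length_toList]; exact hj
    have hj2 : j < lst.length := by rw [hlen]; omega
    refine ⟨j, hj', ?_⟩
    rw [hget j hj2]
    have : lst[j] = S.toList[j] := List.getElem_append_left hj
    rw [this, hju]

lemma adv_decomp {V : Type*} [Fintype V] [DecidableEq V] (G : SimpleGraph V) (Jl : Finset V)
    {η : V → ℝ} (hη : η ∈ CHM G Jl) :
    ∃ w : Finset V → ℝ, (∀ S, 0 ≤ w S) ∧ (∑ S : Finset V, w S = 1) ∧
      (∀ S, w S ≠ 0 → IsMaxIndepIn G Jl S) ∧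
      (∀ v, ∑ S : Finset V, w S * indVec S v = η v) := by
  classical
  rw [CHM, _root_.convexHull_eq] at hη
  obtain ⟨ι', t, wt, z, hw0, hw1, hz, hcm⟩ := hη
  rw [Finset.centerMass_eq_of_sum_1 _ _ hw1] at hcm
  have hsel : ∀ i ∈ t, ∃ S : Finset V, IsMaxIndepIn G Jl S ∧ indVec S = z i := by
    intro i hi
    obtain ⟨S, hS, hSe⟩ := hz i hi
    exact ⟨S, hS, hSe⟩
  choose Sel hSel1 hSel2 using hsel
  set w : Finset V → ℝ := fun S => ∑ i ∈ t, if z i = indVec S then wt i else 0 with hw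
  have key : ∀ (i : ι') (hi : i ∈ t) (f : Finset V → ℝ),
      (∑ S : Finset V, if z i = indVec S then f S else 0) = f (Sel i hi) := by
    intro i hi f
    rw [Finset.sum_eq_single (Sel i hi)]
    · rw [if_pos (hSel2 i hi).symm]
    · intro S _ hne
      rw [if_neg]
      intro he
      exact hne (adv_indVec_inj ((hSel2 i hi).trans he)).symm
    · intro h
      exact absurd (mem_univ _) h
  refine ⟨w, ?_, ?_, ?_, ?_⟩
  · intro S
    apply Finset.sum_nonneg
    intro i hi
    by_cases h : z i = indVec S
    · rw [if_pos h]; exact hw0 i hi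
    · rw [if_neg h]
  · rw [hw, Finset.sum_comm]
    rw [← hw1]
    apply Finset.sum_congr rfl
    intro i hi
    exact key i hi (fun _ => wt i)
  · intro S hS
    obtain ⟨i, hi, hne⟩ := Finset.exists_ne_zero_of_sum_ne_zero hS
    have hzi : z i = indVec S := by
      by_contra h
      rw [if_neg h] at hne
      exact hne rfl
    have : Sel i hi = S := adv_indVec_inj ((hSel2 i hi).trans hzi)
    rw [← this]
    exact hSel1 i hi
  · intro v
    have hstep : ∀ S : Finset V, w S * indVec S v
        = ∑ i ∈ t, if z i = indVec S then wt i * indVec S v else 0 := by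
      intro S
      rw [hw, Finset.sum_mul]
      apply Finset.sum_congr rfl
      intro i _
      by_cases h : z i = indVec S
      · rw [if_pos h, if_pos h]
      · rw [if_neg h, if_neg h, zero_mul]
    calc ∑ S : Finset V, w S * indVec S v
        = ∑ S : Finset V, ∑ i ∈ t, if z i = indVec S then wt i * indVec S v else 0 :=
          Finset.sum_congr rfl fun S _ => hstep S
      _ = ∑ i ∈ t, ∑ S : Finset V, if z i = indVec S then wt i * indVec S v else 0 :=
          Finset.sum_comm
      _ = ∑ i ∈ t, wt i * z i v := by
          apply Finset.sum_congr rfl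
          intro i hi
          rw [key i hi (fun S => wt i * indVec S v), hSel2 i hi]
      _ = η v := by
          rw [← hcm, Finset.sum_apply]
          apply Finset.sum_congr rfl
          intro i _
          rw [Pi.smul_apply, smul_eq_mul]

end AdvComb

/-- **Lemma 1.** If for some nonempty `L ⊆ K`, `σ > 0` and `μ, ν ∈ Φ(L)` we have
`σ·μ > ν` componentwise on `L`, then for every sufficiently small `ε > 0` there are a
deterministic channel process with long-run state fractions `π` and a (randomized)
arrival process satisfying Assumption A1 whose rate vector is supported on `L` and is
within `ε` (in sup norm on `L`) of `ν + ε·e_L`, such that under some tie-breaking rule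
the GMS policy is unstable: `E[Σ_l Q_l[t]] → ∞`. -/
theorem adversarial_instability {V : Type*} [Fintype V] [DecidableEq V]
    (G : SimpleGraph V) (π : Finset V → ℝ) (hπ : IsFading π)
    (L : Finset V) (hL : L.Nonempty)
    (σ : ℝ) (hσ : 0 < σ)
    (μvec νvec : V → ℝ) (hμ : μvec ∈ Phi G π L) (hν : νvec ∈ Phi G π L)
    (hdom : ∀ v ∈ L, νvec v < σ * μvec v) :
    ∃ ε0 : ℝ, 0 < ε0 ∧ ∀ ε : ℝ, 0 < ε → ε < ε0 →
      ∃ (lam : V → ℝ) (GSd : ℕ → Finset V),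
        -- the arrival rate vector is supported on `L` and close to `ν + ε·e_L`
        (∀ v, v ∉ L → lam v = 0) ∧
        (∀ v ∈ L, |lam v - (νvec v + ε)| < ε) ∧
        -- the deterministic channel process has long-run state fractions `π`
        (∀ J : Finset V,
          Tendsto (fun T : ℕ => (∑ t ∈ Finset.range T, if GSd t = J then (1 : ℝ) else 0) / T)
            atTop (nhds (π J))) ∧
        ∃ (Ω : Type) (mΩ : MeasurableSpace Ω) (μ : Measure Ω),
          IsProbabilityMeasure μ ∧
          ∃ (A : ℕ → V → Ω → ℕ) (S : ℕ → Ω → Finset V) (Q : ℕ → V → Ω → ℕ),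
            (∀ t l, Measurable (A t l)) ∧
            (∀ t, Measurable (S t)) ∧
            (∀ t l, Measurable (Q t l)) ∧
            (∃ B : ℕ, ∀ t l ω, A t l ω ≤ B) ∧
            -- queue dynamics under a GMS policy (some tie-breaking rule)
            QueueEvol A (fun t _ => GSd t) S Q ∧
            IsGMSPolicy G (fun t _ => GSd t) S Q ∧
            -- Assumption A1: long-run time averages of the arrivals are `lam`
            (∀ᵐ ω ∂μ, ∀ l : V,
              Tendsto (fun T : ℕ => (∑ t ∈ Finset.range T, (A t l ω : ℝ)) / T)
                atTop (nhds (lam l))) ∧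
            -- instability
            Tendsto (fun t : ℕ => ∫ ω, (∑ l : V, (Q t l ω : ℝ)) ∂μ) atTop atTop := by
  classical
  obtain ⟨v0, hv0⟩ := hL
  obtain ⟨η, hηmem, hηeq⟩ := hν
  have hWex := fun J : Finset V => adv_decomp G (J ∩ L) (hηmem J)
  choose W hW0 hW1 hWmax hWind using hWex
  set p : Finset V × Finset V → ℝ := fun k => π k.1 * W k.1 k.2 with hpdef
  have hp0 : ∀ k, 0 ≤ p k := fun k => mul_nonneg (hπ.1 _) (hW0 _ _)
  have hrow : ∀ J : Finset V, (∑ S : Finset V, p (J, S)) = π J := by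
    intro J
    have h2 : (∑ S : Finset V, p (J, S)) = π J * ∑ S : Finset V, W J S := by
      rw [Finset.mul_sum]
    rw [h2, hW1, mul_one]
  have hpsum : ∑ k : Finset V × Finset V, p k = 1 := by
    rw [Fintype.sum_prod_type]
    rw [Finset.sum_congr rfl fun J _ => hrow J]
    exact hπ.2
  haveI hFin : Fintype {k : Finset V × Finset V // p k ≠ 0} := Fintype.ofFinite _
  haveI hNE : Nonempty {k : Finset V × Finset V // p k ≠ 0} := by
    by_contra h
    rw [not_nonempty_iff] at h
    have h0 : ∑ k : Finset V × Finset V, p k = 0 :=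
      Finset.sum_eq_zero fun k _ => by
        by_contra hk
        exact h.false ⟨k, hk⟩
    rw [hpsum] at h0
    exact one_ne_zero h0
  have hsub : ∀ g : Finset V × Finset V → ℝ, (∀ k, p k = 0 → g k = 0) →
      (∑ k : {k : Finset V × Finset V // p k ≠ 0}, g k.1)
        = ∑ k : Finset V × Finset V, g k := by
    intro g hg
    rw [← Finset.sum_subtype (Finset.univ.filter fun k : Finset V × Finset V => p k ≠ 0)
      (fun x => by simp) g]
    exact Finset.sum_filter_of_ne fun x _ hx hp => hx (hg x hp)
  have hp'sum : (∑ k : {k : Finset V × Finset V // p k ≠ 0}, p k.1) = 1 := by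
    rw [hsub p (fun k hk => hk)]
    exact hpsum
  obtain ⟨c, hc⟩ := adv_exists_seq (fun k : {k : Finset V × Finset V // p k ≠ 0} => p k.1)
    (fun k => hp0 k.1) hp'sum
  -- general frequency lemma
  have hfreq : ∀ f : Finset V × Finset V → ℝ,
      Tendsto (fun T : ℕ => (∑ t ∈ Finset.range T, f (c t).1) / T) atTop
        (nhds (∑ k : {k : Finset V × Finset V // p k ≠ 0}, p k.1 * f k.1)) := by
    intro f
    have hterm : ∀ t : ℕ, f (c t).1
        = ∑ k : {k : Finset V × Finset V // p k ≠ 0},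
            (if c t = k then (1:ℝ) else 0) * f k.1 := by
      intro t
      rw [Finset.sum_eq_single (c t)]
      · simp
      · intro k _ hk
        rw [if_neg fun h => hk h.symm, zero_mul]
      · intro h
        exact absurd (Finset.mem_univ _) h
    have hrw : ∀ T : ℕ, (∑ t ∈ Finset.range T, f (c t).1) / T
        = ∑ k : {k : Finset V × Finset V // p k ≠ 0},
            ((∑ t ∈ Finset.range T, if c t = k then (1:ℝ) else 0) / T) * f k.1 := by
      intro T
      rw [Finset.sum_congr rfl fun t (_ : t ∈ Finset.range T) => hterm t, Finset.sum_comm,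
        Finset.sum_div]
      apply Finset.sum_congr rfl
      intro k _
      rw [← Finset.sum_mul, mul_div_right_comm]
    have htends : Tendsto (fun T : ℕ => ∑ k : {k : Finset V × Finset V // p k ≠ 0},
        ((∑ t ∈ Finset.range T, if c t = k then (1:ℝ) else 0) / T) * f k.1) atTop
        (nhds (∑ k : {k : Finset V × Finset V // p k ≠ 0}, p k.1 * f k.1)) :=
      tendsto_finset_sum _ fun k _ => (hc k).mul_const (f k.1)
    exact htends.congr fun T => (hrw T).symm
  -- basic facts about the chosen symbols
  have hWne : ∀ t, W (c t).1.1 (c t).1.2 ≠ 0 := by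
    intro t h
    apply (c t).2
    show π (c t).1.1 * W (c t).1.1 (c t).1.2 = 0
    rw [h, mul_zero]
  have hct : ∀ t, IsMaxIndepIn G ((c t).1.1 ∩ L) (c t).1.2 := fun t => hWmax _ _ (hWne t)
  have hExt : ∀ k : {k : Finset V × Finset V // p k ≠ 0},
      ∃ T, k.1.2 ⊆ T ∧ IsMaxIndepIn G Finset.univ T := by
    intro k
    apply adv_exists_max_ext
    refine ⟨Finset.subset_univ _, ?_⟩
    refine (hWmax k.1.1 k.1.2 fun h => k.2 ?_).1.2
    show π k.1.1 * W k.1.1 k.1.2 = 0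
    rw [h, mul_zero]
  choose Ext hExtSub hExtMax using hExt
  set GSd : ℕ → Finset V := fun t => (c t).1.1 with hGSd
  have hserveiff : ∀ t, ∀ l ∈ L, ((l ∈ GSd t ∧ l ∈ Ext (c t)) ↔ l ∈ (c t).1.2) := by
    intro t l hl
    constructor
    · rintro ⟨hJ, hE⟩
      by_contra hS
      have hmax := hct t
      have hins : IsIndepIn G ((c t).1.1 ∩ L) (insert l (c t).1.2) := by
        constructor
        · rw [Finset.insert_subset_iff]
          exact ⟨Finset.mem_inter.2 ⟨hJ, hl⟩, hmax.1.1⟩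
        · intro u hu v hv
          have hsubE : insert l (c t).1.2 ⊆ Ext (c t) :=
            Finset.insert_subset hE (hExtSub (c t))
          exact (hExtMax (c t)).1.2 u (hsubE hu) v (hsubE hv)
      have heq := hmax.2 _ hins (Finset.subset_insert _ _)
      exact hS (by rw [heq]; exact Finset.mem_insert_self _ _)
    · intro hS
      exact ⟨(Finset.mem_inter.1 ((hct t).1.1 hS)).1, hExtSub (c t) hS⟩
  -- ε0 = 1
  refine ⟨1, one_pos, fun ε hε hε1 => ?_⟩
  set m : ℕ → ℕ := fun t => ⌊ε * (t:ℝ)⌋₊ with hm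
  have hmmono : Monotone m := by
    intro a b hab
    apply Nat.floor_mono
    apply mul_le_mul_of_nonneg_left _ hε.le
    exact_mod_cast hab
  have hm0 : m 0 = 0 := by simp [hm]
  have hm1 : ∀ t, m (t+1) ≤ m t + 1 := by
    intro t
    have h1 : ε * ((t+1 : ℕ):ℝ) ≤ ε * (t:ℝ) + 1 := by
      push_cast
      nlinarith [hε.le, le_of_lt hε1, Nat.cast_nonneg (α := ℝ) t]
    calc m (t+1) ≤ ⌊ε * (t:ℝ) + 1⌋₊ := Nat.floor_mono h1
      _ = m t + 1 := by
          rw [Nat.floor_add_one (by positivity)]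
  have hfloor : Tendsto (fun T : ℕ => (m T : ℝ) / T) atTop (nhds ε) :=
    (tendsto_nat_floor_mul_div_atTop hε.le).comp tendsto_natCast_atTop_atTop
  have hmtop : Tendsto (fun t : ℕ => (m t : ℝ)) atTop atTop :=
    tendsto_natCast_atTop_atTop.comp (tendsto_nat_floor_mul_atTop ε hε)
  have hN1 : ∀ t : ℕ, m t = 0 → t < ⌈1 / ε⌉₊ := by
    intro t ht
    have h1 : ε * (t:ℝ) < 1 := Nat.floor_eq_zero.1 ht
    have h2 : (t:ℝ) < 1 / ε := by
      rw [lt_div_iff₀ hε]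
      linarith [h1, mul_comm ε (t:ℝ)]
    have h3 : (t:ℝ) < ((⌈1 / ε⌉₊ : ℕ) : ℝ) := lt_of_lt_of_le h2 (Nat.le_ceil _)
    exact_mod_cast h3
  clear_value m
  -- the processes
  refine ⟨fun v => if v ∈ L then νvec v + ε else 0, GSd,
    fun v hv => if_neg hv, fun v hv => by simpa [hv] using hε, ?_, ?_⟩
  · -- channel frequencies
    intro J
    have hval : (∑ k : {k : Finset V × Finset V // p k ≠ 0},
        p k.1 * (if k.1.1 = J then (1:ℝ) else 0)) = π J := by
      refine Eq.trans (hsub (fun k => p k * (if k.1 = J then (1:ℝ) else 0))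
        (fun k hk => by simp only [hk, zero_mul])) ?_
      rw [Fintype.sum_prod_type]
      rw [Finset.sum_eq_single J]
      · simpa using hrow J
      · intro J' _ hne
        apply Finset.sum_eq_zero
        intro S _
        rw [if_neg hne, mul_zero]
      · intro h
        exact absurd (Finset.mem_univ J) h
    have hres := hfreq (fun k => if k.1 = J then (1:ℝ) else 0)
    rw [hval] at hres
    exact hres
  · -- probability space and processes
    refine ⟨Unit, inferInstance, MeasureTheory.Measure.dirac (), inferInstance,
      (fun t l _ => (if l ∈ L then m (t+1) else 0)
        - ((if l ∈ L then m t else 0) - (if l ∈ GSd t ∧ l ∈ Ext (c t) then 1 else 0))),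
      (fun t _ => Ext (c t)),
      (fun t l _ => if l ∈ L then m t else 0),
      fun t l => measurable_const, fun t => measurable_const, fun t l => measurable_const,
      ⟨2, ?_⟩, ⟨fun l ω => by by_cases h : l ∈ L <;> simp [h, hm0], ?_⟩, ?_, ?_, ?_⟩
    · -- arrival bound
      intro t l ω
      by_cases hl : l ∈ L
      · simp only [if_pos hl]
        have h1 := hm1 t
        by_cases hs : (l ∈ GSd t ∧ l ∈ Ext (c t))
        · rw [if_pos hs]; omega
        · rw [if_neg hs]; omega
      · simp [hl]
    · -- queue evolution
      intro t l ω
      have hle : (if l ∈ L then m t else 0) - (if l ∈ GSd t ∧ l ∈ Ext (c t) then 1 else 0)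
          ≤ (if l ∈ L then m (t+1) else 0) := by
        have hmt : (if l ∈ L then m t else 0) ≤ (if l ∈ L then m (t+1) else 0) := by
          by_cases hl : l ∈ L
          · simp only [if_pos hl]; exact hmmono (Nat.le_succ t)
          · simp [hl]
        exact (Nat.sub_le _ _).trans hmt
      exact (Nat.add_sub_cancel' hle).symm
    · -- GMS policy
      intro t ω
      obtain ⟨s, himg, hinj, hjS0, hsurj⟩ :=
        adv_exists_enum v0 (c t).1.2 (Ext (c t)) (hExtSub (c t))
      refine ⟨hExtMax (c t), s, himg, hinj, ?_⟩
      intro i hi v hv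
      set wf : V → ℝ := fun l =>
        ((if l ∈ L then m t else 0 : ℕ) : ℝ) * (if l ∈ GSd t then 1 else 0) with hwf
      show wf v ≤ wf (s i)
      have hwle : ∀ u : V, wf u ≤ (m t : ℝ) := by
        intro u
        rw [hwf]
        by_cases h1 : u ∈ L <;> by_cases h2 : u ∈ GSd t <;>
          simp [h1, h2] <;> positivity
      have hw0 : ∀ u : V, 0 ≤ wf u := by
        intro u
        rw [hwf]
        by_cases h2 : u ∈ GSd t <;> simp [h2] <;> positivity
      by_cases hiS : i < (c t).1.2.card
      · have hsS0 := hjS0 i hiS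
        have hmem := (hct t).1.1 hsS0
        rw [Finset.mem_inter] at hmem
        have hwi : wf (s i) = (m t : ℝ) := by
          rw [hwf]
          have hJ : s i ∈ GSd t := hmem.1
          simp [hmem.2, hJ]
        rw [hwi]
        exact hwle v
      · push_neg at hiS
        suffices hv0' : wf v = 0 by
          rw [hv0']
          exact hw0 (s i)
        by_contra hne
        have hvL : v ∈ L := by
          by_contra h
          apply hne
          rw [hwf]
          simp [h]
        have hvJ : v ∈ GSd t := by
          by_contra h
          apply hne
          rw [hwf]
          simp [h]
        have hnadj : ∀ u ∈ (c t).1.2, v ≠ u ∧ ¬ G.Adj v u := by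
          intro u hu
          obtain ⟨j, hj, hju⟩ := hsurj u hu
          have hthis := hv j (lt_of_lt_of_le hj hiS)
          rw [hju] at hthis
          exact hthis
        have hins : IsIndepIn G ((c t).1.1 ∩ L) (insert v (c t).1.2) := by
          constructor
          · rw [Finset.insert_subset_iff]
            exact ⟨Finset.mem_inter.2 ⟨hvJ, hvL⟩, (hct t).1.1⟩
          · intro u1 hu1 u2 hu2
            rcases Finset.mem_insert.1 hu1 with rfl | hu1'
            · rcases Finset.mem_insert.1 hu2 with rfl | hu2'
              · exact G.irrefl
              · exact (hnadj u2 hu2').2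
            · rcases Finset.mem_insert.1 hu2 with rfl | hu2'
              · exact fun h => (hnadj u1 hu1').2 h.symm
              · exact (hct t).1.2 u1 hu1' u2 hu2'
        have heq := (hct t).2 _ hins (Finset.subset_insert _ _)
        have hvin : v ∈ (c t).1.2 := by
          rw [heq]
          exact Finset.mem_insert_self _ _
        exact (hnadj v hvin).1 rfl
    · -- A1 : arrival rates
      apply MeasureTheory.ae_of_all
      intro ω l
      by_cases hl : l ∈ L
      · -- main case
        have hserve' : ∀ t, ((l ∈ GSd t ∧ l ∈ Ext (c t)) ↔ l ∈ (c t).1.2) :=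
          fun t => hserveiff t l hl
        have hAval : ∀ t : ℕ,
            ((if l ∈ L then m (t+1) else 0)
              - ((if l ∈ L then m t else 0) - (if l ∈ GSd t ∧ l ∈ Ext (c t) then 1 else 0)))
            = (m (t+1) - m t) + (if m t ≠ 0 ∧ l ∈ (c t).1.2 then 1 else 0) := by
          intro t
          simp only [if_pos hl]
          have hmon : m t ≤ m (t + 1) := hmmono (Nat.le_succ t)
          by_cases h1 : l ∈ (c t).1.2
          · rw [if_pos ((hserve' t).2 h1)]
            by_cases h2 : m t = 0
            · rw [if_neg (by simp [h2]), h2]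
              omega
            · rw [if_pos ⟨h2, h1⟩]
              omega
          · rw [if_neg (fun h => h1 ((hserve' t).1 h)), if_neg (by simp [h1])]
            omega
        have hsum : ∀ T : ℕ, (∑ t ∈ Finset.range T,
            (((if l ∈ L then m (t+1) else 0)
              - ((if l ∈ L then m t else 0)
                - (if l ∈ GSd t ∧ l ∈ Ext (c t) then 1 else 0)) : ℕ) : ℝ))
            = (m T : ℝ) + ∑ t ∈ Finset.range T,
                (if m t ≠ 0 ∧ l ∈ (c t).1.2 then (1:ℝ) else 0) := by
          intro T
          have h1 : ∀ t : ℕ, (((if l ∈ L then m (t+1) else 0)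
              - ((if l ∈ L then m t else 0)
                - (if l ∈ GSd t ∧ l ∈ Ext (c t) then 1 else 0)) : ℕ) : ℝ)
              = ((m (t+1) - m t : ℕ) : ℝ)
                + (if m t ≠ 0 ∧ l ∈ (c t).1.2 then (1:ℝ) else 0) := by
            intro t
            rw [hAval t]
            push_cast
            by_cases h : (m t ≠ 0 ∧ l ∈ (c t).1.2) <;> simp [h]
          rw [Finset.sum_congr rfl fun t (_ : t ∈ Finset.range T) => h1 t,
            Finset.sum_add_distrib]
          congr 1
          rw [← Nat.cast_sum]
          rw [Finset.sum_range_tsub hmmono, hm0, Nat.sub_zero]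
        -- limit of the service indicator
        have hvalB : (∑ k : {k : Finset V × Finset V // p k ≠ 0},
            p k.1 * (if l ∈ k.1.2 then (1:ℝ) else 0)) = νvec l := by
          refine Eq.trans (hsub (fun k => p k * (if l ∈ k.2 then (1:ℝ) else 0))
            (fun k hk => by simp only [hk, zero_mul])) ?_
          rw [Fintype.sum_prod_type]
          have hν_l : νvec l = ∑ J : Finset V, π J * η J l := by
            rw [hηeq, Finset.sum_apply]
            exact Finset.sum_congr rfl fun J _ => by rw [Pi.smul_apply, smul_eq_mul]
          rw [hν_l]
          apply Finset.sum_congr rfl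
          intro J _
          have hstep : ∀ S : Finset V, p (J, S) * (if l ∈ S then (1:ℝ) else 0)
              = π J * (W J S * indVec S l) := by
            intro S
            show π J * W J S * (if l ∈ S then (1:ℝ) else 0) = π J * (W J S * indVec S l)
            by_cases hmem : l ∈ S <;> simp [indVec, hmem] <;> ring
          rw [Finset.sum_congr rfl fun S (_ : S ∈ Finset.univ) => hstep S, ← Finset.mul_sum,
            hWind J l]
        have hB : Tendsto (fun T : ℕ => (∑ t ∈ Finset.range T,
            (if l ∈ (c t).1.2 then (1:ℝ) else 0)) / T) atTop (nhds (νvec l)) := by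
          have hres := hfreq (fun k => if l ∈ k.2 then (1:ℝ) else 0)
          rw [hvalB] at hres
          exact hres
        -- comparison of indicators
        set N1 : ℕ := ⌈1 / ε⌉₊ with hN1def
        have hABle : ∀ t : ℕ, (if m t ≠ 0 ∧ l ∈ (c t).1.2 then (1:ℝ) else 0)
            ≤ (if l ∈ (c t).1.2 then (1:ℝ) else 0) := by
          intro t
          by_cases h : (m t ≠ 0 ∧ l ∈ (c t).1.2)
          · rw [if_pos h, if_pos h.2]
          · rw [if_neg h]
            by_cases h2 : l ∈ (c t).1.2 <;> simp [h2]
        have hdiffb : ∀ T : ℕ, (∑ t ∈ Finset.range T,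
            ((if l ∈ (c t).1.2 then (1:ℝ) else 0)
              - (if m t ≠ 0 ∧ l ∈ (c t).1.2 then (1:ℝ) else 0))) ≤ N1 := by
          intro T
          have hterm : ∀ t ∈ Finset.range T,
              ((if l ∈ (c t).1.2 then (1:ℝ) else 0)
                - (if m t ≠ 0 ∧ l ∈ (c t).1.2 then (1:ℝ) else 0))
              ≤ (if t < N1 then (1:ℝ) else 0) := by
            intro t _
            by_cases h2 : m t = 0
            · rw [if_pos (hN1 t h2)]
              by_cases h3 : l ∈ (c t).1.2
              · rw [if_pos h3, if_neg (by simp [h2])]; norm_num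
              · rw [if_neg h3, if_neg (by simp [h3])]; norm_num
            · by_cases h3 : l ∈ (c t).1.2
              · rw [if_pos h3, if_pos ⟨h2, h3⟩]
                by_cases h4 : t < N1 <;> simp [h4]
              · rw [if_neg h3, if_neg (by simp [h3])]
                by_cases h4 : t < N1 <;> simp [h4]
          calc (∑ t ∈ Finset.range T, ((if l ∈ (c t).1.2 then (1:ℝ) else 0)
                - (if m t ≠ 0 ∧ l ∈ (c t).1.2 then (1:ℝ) else 0)))
              ≤ ∑ t ∈ Finset.range T, (if t < N1 then (1:ℝ) else 0) :=
                Finset.sum_le_sum hterm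
            _ = (((Finset.range T).filter (fun t => t < N1)).card : ℝ) := by
                rw [Finset.sum_boole]
            _ ≤ (N1 : ℝ) := by
                have hss : (Finset.range T).filter (fun t => t < N1) ⊆ Finset.range N1 := by
                  intro x hx
                  rw [Finset.mem_range]
                  exact (Finset.mem_filter.1 hx).2
                have hcc := Finset.card_le_card hss
                rw [Finset.card_range] at hcc
                exact_mod_cast hcc
        have hdiff0 : Tendsto (fun T : ℕ => (∑ t ∈ Finset.range T,
            ((if l ∈ (c t).1.2 then (1:ℝ) else 0)
              - (if m t ≠ 0 ∧ l ∈ (c t).1.2 then (1:ℝ) else 0))) / T) atTop (nhds 0) := by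
          apply squeeze_zero (g := fun T : ℕ => (N1 : ℝ) / T)
          · intro T
            apply div_nonneg _ (Nat.cast_nonneg T)
            apply Finset.sum_nonneg
            intro t _
            have := hABle t
            linarith
          · intro T
            exact div_le_div_of_nonneg_right (hdiffb T) (Nat.cast_nonneg T)
          · exact tendsto_const_div_atTop_nhds_zero_nat _
        have hA : Tendsto (fun T : ℕ => (∑ t ∈ Finset.range T,
            (if m t ≠ 0 ∧ l ∈ (c t).1.2 then (1:ℝ) else 0)) / T) atTop (nhds (νvec l)) := by
          have heq : ∀ T : ℕ, (∑ t ∈ Finset.range T,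
              (if m t ≠ 0 ∧ l ∈ (c t).1.2 then (1:ℝ) else 0)) / T
              = (∑ t ∈ Finset.range T, (if l ∈ (c t).1.2 then (1:ℝ) else 0)) / T
                - (∑ t ∈ Finset.range T, ((if l ∈ (c t).1.2 then (1:ℝ) else 0)
                  - (if m t ≠ 0 ∧ l ∈ (c t).1.2 then (1:ℝ) else 0))) / T := by
            intro T
            rw [Finset.sum_sub_distrib]
            ring
          have hres := hB.sub hdiff0
          rw [sub_zero] at hres
          exact hres.congr fun T => (heq T).symm
        -- put it together
        have ht : Tendsto (fun T : ℕ => (∑ t ∈ Finset.range T,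
            (((if l ∈ L then m (t+1) else 0) - ((if l ∈ L then m t else 0)
              - (if l ∈ GSd t ∧ l ∈ Ext (c t) then 1 else 0)) : ℕ) : ℝ)) / T) atTop
            (nhds (νvec l + ε)) := by
          have hgoal := hfloor.add hA
          rw [add_comm ε (νvec l)] at hgoal
          apply Tendsto.congr _ hgoal
          intro T
          rw [hsum T, add_div]
        simp only [hl, if_true]
        apply ht.congr
        intro T
        simp [hl]
      · -- l ∉ L
        have hA0 : ∀ t : ℕ, ((if l ∈ L then m (t+1) else 0)
            - ((if l ∈ L then m t else 0)
              - (if l ∈ GSd t ∧ l ∈ Ext (c t) then 1 else 0)) : ℕ) = 0 := by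
          intro t
          simp [hl]
        simp only [hl, if_false]
        have hz : (fun T : ℕ => (∑ t ∈ Finset.range T,
            (((if l ∈ L then m (t+1) else 0) - ((if l ∈ L then m t else 0)
              - (if l ∈ GSd t ∧ l ∈ Ext (c t) then 1 else 0)) : ℕ) : ℝ)) / T)
            = fun T : ℕ => 0 := by
          funext T
          rw [Finset.sum_congr rfl fun t (_ : t ∈ Finset.range T) => by rw [hA0 t]]
          simp
        have hzt : Tendsto (fun T : ℕ => (∑ t ∈ Finset.range T,
            (((if l ∈ L then m (t+1) else 0) - ((if l ∈ L then m t else 0)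
              - (if l ∈ GSd t ∧ l ∈ Ext (c t) then 1 else 0)) : ℕ) : ℝ)) / T) atTop (nhds 0) := by
          rw [hz]
          exact tendsto_const_nhds
        apply hzt.congr
        intro T
        simp [hl]
    · -- instability
      have h2 : Tendsto (fun t : ℕ => (L.card : ℝ) * (m t : ℝ)) atTop atTop :=
        Tendsto.const_mul_atTop (show (0:ℝ) < (L.card : ℝ) by
            exact_mod_cast Finset.card_pos.2 ⟨v0, hv0⟩) hmtop
      have hIstar : Tendsto (fun t : ℕ => ∫ _ω : Unit, (∑ l : V,
          (((if l ∈ L then m t else 0 : ℕ)) : ℝ)) ∂(MeasureTheory.Measure.dirac ()))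
          atTop atTop := by
        apply Tendsto.congr _ h2
        intro t
        rw [MeasureTheory.integral_dirac]
        have h1 : ∀ l : V, (((if l ∈ L then m t else 0 : ℕ)) : ℝ)
            = if l ∈ L then (m t : ℝ) else 0 := fun l => by by_cases h : l ∈ L <;> simp [h]
        rw [Finset.sum_congr rfl fun l (_ : l ∈ Finset.univ) => h1 l, Finset.sum_ite_mem,
          Finset.univ_inter, Finset.sum_const, nsmul_eq_mul]
      exact hIstar
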